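/- Let $k$ be a field and define, for $b_1, \dots, b_{n-1} \in k^\times$, the map $D(b_1, \dots, b_{n-1}) := (b_1 \cdots b_{n-1}) \otimes (b_1 \wedge \cdots \wedge b_{n-1}) \in (k \otimes_{\mathbb{Z}} \wedge^{n-1} k^\times)/\mathcal{R}$ (extended by $0$ if some argument is $0$). Then $D$ is multilinear in the sense of derivations: $D(ab, b_2, \dots, b_{n-1}) = a \cdot D(b, b_2, \dots, b_{n-1}) + b \cdot D(a, b_2, \dots, b_{n-1})$ and $D(a + b, b_2, \dots, b_{n-1}) = D(a, b_2, \dots, b_{n-1}) + D(b, b_2, \dots, b_{n-1})$ for all $a, b \in k$ and $b_2, \dots, b_{n-1} \in k^\times$, and is alternating in its arguments. -/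

import Mathlib

set_option synthInstance.maxHeartbeats 400000
set_option maxHeartbeats 1000000

open TensorProduct
open scoped Classical

variable (k : Type*) [Field k]

/-- The wedge `b₁ ∧ ⋯ ∧ bₘ` in the `m`-th exterior power (over `ℤ`) of the
multiplicative group `kˣ` (written additively). -/
noncomputable def uWedge (m : ℕ) (b : Fin m → kˣ) : ⋀[ℤ]^m (Additive kˣ) :=
  ⟨ExteriorAlgebra.ιMulti ℤ m (fun i => Additive.ofMul (b i)),
    ExteriorAlgebra.ιMulti_range ℤ m (Set.mem_range_self _)⟩

/-- The element `a ⊗ (a ∧ b₁ ∧ ⋯ ∧ bₘ)`, interpreted as `0` when `a = 0`. -/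
noncomputable def relElt (m : ℕ) (a : k) (b : Fin m → kˣ) :
    k ⊗[ℤ] ⋀[ℤ]^(m + 1) (Additive kˣ) :=
  if h : a = 0 then 0 else a ⊗ₜ[ℤ] uWedge k (m + 1) (Fin.cons (Units.mk0 a h) b)

/-- The `k`-subspace `𝓡` spanned by
`a ⊗ (a ∧ b₁ ∧ ⋯) - (1+a) ⊗ ((1+a) ∧ b₁ ∧ ⋯)`. -/
noncomputable def relSubW (m : ℕ) : Submodule k (k ⊗[ℤ] ⋀[ℤ]^(m + 1) (Additive kˣ)) :=
  Submodule.span k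
    {x | ∃ (a : k) (b : Fin m → kˣ), x = relElt k m a b - relElt k m (1 + a) b}

/-- The map `D(b₁,…,b_{m+1}) = (b₁⋯b_{m+1}) ⊗ (b₁ ∧ ⋯ ∧ b_{m+1})` in
`(k ⊗[ℤ] ⋀^{m+1} kˣ)/𝓡`, extended by `0` if some argument vanishes. -/
noncomputable def Dmulti (m : ℕ) (v : Fin (m + 1) → k) :
    (k ⊗[ℤ] ⋀[ℤ]^(m + 1) (Additive kˣ)) ⧸ relSubW k m :=
  if h : ∀ i, v i ≠ 0 then
    Submodule.Quotient.mk
      ((∏ i, v i) ⊗ₜ[ℤ] uWedge k (m + 1) (fun i => Units.mk0 (v i) (h i)))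
  else 0

section auxLemmas
variable {k}

lemma ofMul_comp_cons (m : ℕ) (z : kˣ) (b : Fin m → kˣ) :
    (fun i => Additive.ofMul ((Fin.cons z b : Fin (m+1) → kˣ) i)) =
      Fin.cons (α := fun _ => Additive kˣ) (Additive.ofMul z)
        (fun i => Additive.ofMul (b i)) :=
  Fin.comp_cons (fun x : kˣ => Additive.ofMul x) z b

lemma uWedge_cons_mul (m : ℕ) (x y : kˣ) (b : Fin m → kˣ) :
    uWedge k (m+1) (Fin.cons (x*y) b) =
      uWedge k (m+1) (Fin.cons x b) + uWedge k (m+1) (Fin.cons y b) := by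
  apply Subtype.ext
  show (ExteriorAlgebra.ιMulti ℤ (m+1)) _ =
    (ExteriorAlgebra.ιMulti ℤ (m+1)) _ + (ExteriorAlgebra.ιMulti ℤ (m+1)) _
  rw [ofMul_comp_cons, ofMul_comp_cons, ofMul_comp_cons, ofMul_mul]
  exact MultilinearMap.cons_add _ _ _ _

lemma uWedge_cons_one (m : ℕ) (b : Fin m → kˣ) :
    uWedge k (m+1) (Fin.cons 1 b) = 0 := by
  apply Subtype.ext
  show (ExteriorAlgebra.ιMulti ℤ (m+1)) _ = 0
  apply (ExteriorAlgebra.ιMulti ℤ (m+1)).map_coord_zero 0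
  simp

lemma uWedge_cons_inv (m : ℕ) (x : kˣ) (b : Fin m → kˣ) :
    uWedge k (m+1) (Fin.cons x⁻¹ b) = -uWedge k (m+1) (Fin.cons x b) := by
  have h := uWedge_cons_mul m x x⁻¹ b
  rw [mul_inv_cancel, uWedge_cons_one] at h
  exact eq_neg_of_add_eq_zero_right h.symm

lemma relElt_zero (m : ℕ) (b : Fin m → kˣ) : relElt k m 0 b = 0 := by
  simp [relElt]

lemma relElt_of_ne (m : ℕ) (a : k) (ha : a ≠ 0) (b : Fin m → kˣ) :
    relElt k m a b = a ⊗ₜ[ℤ] uWedge k (m + 1) (Fin.cons (Units.mk0 a ha) b) := by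
  rw [relElt, dif_neg ha]

/-- Leibniz at the level of the tensor product (no quotient needed). -/
lemma relElt_mul (m : ℕ) (a c : k) (b : Fin m → kˣ) :
    relElt k m (a * c) b = a • relElt k m c b + c • relElt k m a b := by
  by_cases ha : a = 0
  · simp [ha, relElt_zero]
  by_cases hc : c = 0
  · simp [hc, relElt_zero]
  have hac : a * c ≠ 0 := mul_ne_zero ha hc
  rw [relElt_of_ne m a ha, relElt_of_ne m c hc, relElt_of_ne m (a*c) hac]
  have hu : Units.mk0 (a * c) hac = Units.mk0 a ha * Units.mk0 c hc := by
    ext; simp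
  rw [hu, uWedge_cons_mul, TensorProduct.tmul_add, TensorProduct.smul_tmul',
    TensorProduct.smul_tmul', smul_eq_mul, smul_eq_mul, mul_comm c a]
  ring_nf
  abel

/-- The basic relation in the quotient. -/
lemma mk_relElt_rel (m : ℕ) (a : k) (b : Fin m → kˣ) :
    (Submodule.Quotient.mk (relElt k m a b) :
        (k ⊗[ℤ] ⋀[ℤ]^(m + 1) (Additive kˣ)) ⧸ relSubW k m) =
      Submodule.Quotient.mk (relElt k m (1 + a) b) := by
  rw [Submodule.Quotient.eq]
  exact Submodule.subset_span ⟨a, b, rfl⟩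

lemma mk_relElt_neg_one (m : ℕ) (b : Fin m → kˣ) :
    (Submodule.Quotient.mk (relElt k m (-1) b) :
        (k ⊗[ℤ] ⋀[ℤ]^(m + 1) (Additive kˣ)) ⧸ relSubW k m) = 0 := by
  have := mk_relElt_rel m (-1 : k) b
  rw [add_neg_cancel, relElt_zero] at this
  simpa using this

lemma mk_relElt_neg (m : ℕ) (a : k) (b : Fin m → kˣ) :
    (Submodule.Quotient.mk (relElt k m (-a) b) :
        (k ⊗[ℤ] ⋀[ℤ]^(m + 1) (Additive kˣ)) ⧸ relSubW k m) =
      -Submodule.Quotient.mk (relElt k m a b) := by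
  by_cases ha : a = 0
  · simp [ha, relElt_zero]
  have hna : (-a : k) ≠ 0 := neg_ne_zero.mpr ha
  have hno : (-1 : k) ≠ 0 := by norm_num
  have hu : Units.mk0 (-a) hna = Units.mk0 (-1 : k) hno * Units.mk0 a ha := by
    ext; simp
  have key : relElt k m (-a) b =
      a • relElt k m (-1 : k) b - relElt k m a b := by
    rw [relElt_of_ne m (-a) hna, relElt_of_ne m a ha, relElt_of_ne m (-1 : k) hno,
      hu, uWedge_cons_mul, TensorProduct.tmul_add, TensorProduct.smul_tmul',
      smul_eq_mul, mul_neg_one, sub_eq_add_neg, ← TensorProduct.neg_tmul]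
  rw [key, Submodule.Quotient.mk_sub, Submodule.Quotient.mk_smul,
    mk_relElt_neg_one, smul_zero, zero_sub]

/-- Additivity of `a ↦ a ⊗ (a ∧ w)` in the quotient. -/
lemma mk_relElt_add (m : ℕ) (a c : k) (b : Fin m → kˣ) :
    (Submodule.Quotient.mk (relElt k m (a + c) b) :
        (k ⊗[ℤ] ⋀[ℤ]^(m + 1) (Additive kˣ)) ⧸ relSubW k m) =
      Submodule.Quotient.mk (relElt k m a b) +
        Submodule.Quotient.mk (relElt k m c b) := by
  by_cases ha : a = 0
  · simp [ha, relElt_zero]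
  by_cases hc : c = 0
  · simp [hc, relElt_zero]
  by_cases hs : a + c = 0
  · have hca : c = -a := eq_neg_of_add_eq_zero_right hs
    rw [hs, hca, relElt_zero, mk_relElt_neg]
    simp
  -- main case
  set d : k := c / a with hd
  have hdne : d ≠ 0 := div_ne_zero hc ha
  have h1d : (1 : k) + d ≠ 0 := by
    have : (1 : k) + d = (a + c) / a := by rw [hd]; field_simp
    rw [this]
    exact div_ne_zero hs ha
  have huS : Units.mk0 (a + c) hs = Units.mk0 a ha * Units.mk0 (1 + d) h1d := by
    ext; rw [Units.val_mul, Units.val_mk0, Units.val_mk0, Units.val_mk0, hd]; field_simp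
  have huC : Units.mk0 d hdne = Units.mk0 c hc * (Units.mk0 a ha)⁻¹ := by
    ext; rw [Units.val_mul, Units.val_inv_eq_inv_val, Units.val_mk0, Units.val_mk0,
      Units.val_mk0, hd, div_eq_mul_inv]
  -- expand relElt (a+c)
  have e1 : relElt k m (a + c) b =
      (a + c) ⊗ₜ[ℤ] uWedge k (m+1) (Fin.cons (Units.mk0 a ha) b) +
        a • relElt k m (1 + d) b := by
    rw [relElt_of_ne m (a+c) hs, relElt_of_ne m (1+d) h1d, huS, uWedge_cons_mul,
      TensorProduct.tmul_add, TensorProduct.smul_tmul', smul_eq_mul]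
    congr 2
    rw [hd]; field_simp
  have e2 : a • relElt k m d b =
      relElt k m c b - c ⊗ₜ[ℤ] uWedge k (m+1) (Fin.cons (Units.mk0 a ha) b) := by
    rw [relElt_of_ne m d hdne, relElt_of_ne m c hc, TensorProduct.smul_tmul',
      smul_eq_mul, huC, uWedge_cons_mul, uWedge_cons_inv, TensorProduct.tmul_add,
      TensorProduct.tmul_neg]
    have : a * d = c := by rw [hd]; field_simp
    rw [this]
    abel
  have e3 : relElt k m a b = a ⊗ₜ[ℤ] uWedge k (m+1) (Fin.cons (Units.mk0 a ha) b) :=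
    relElt_of_ne m a ha b
  calc (Submodule.Quotient.mk (relElt k m (a + c) b) :
        (k ⊗[ℤ] ⋀[ℤ]^(m + 1) (Additive kˣ)) ⧸ relSubW k m)
      = Submodule.Quotient.mk
          ((a + c) ⊗ₜ[ℤ] uWedge k (m+1) (Fin.cons (Units.mk0 a ha) b)) +
          a • Submodule.Quotient.mk (relElt k m (1 + d) b) := by
        rw [e1, Submodule.Quotient.mk_add, Submodule.Quotient.mk_smul]
    _ = Submodule.Quotient.mk
          ((a + c) ⊗ₜ[ℤ] uWedge k (m+1) (Fin.cons (Units.mk0 a ha) b)) +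
          a • Submodule.Quotient.mk (relElt k m d b) := by
        rw [← mk_relElt_rel]
    _ = Submodule.Quotient.mk
          ((a + c) ⊗ₜ[ℤ] uWedge k (m+1) (Fin.cons (Units.mk0 a ha) b)) +
          (Submodule.Quotient.mk (relElt k m c b) -
            Submodule.Quotient.mk
              (c ⊗ₜ[ℤ] uWedge k (m+1) (Fin.cons (Units.mk0 a ha) b))) := by
        rw [← Submodule.Quotient.mk_smul, e2, Submodule.Quotient.mk_sub]
    _ = Submodule.Quotient.mk (relElt k m a b) +
          Submodule.Quotient.mk (relElt k m c b) := by
        rw [e3, TensorProduct.add_tmul, Submodule.Quotient.mk_add]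
        abel

lemma Dmulti_cons_eq (m : ℕ) (a : k) (v : Fin m → k) (hv : ∀ i, v i ≠ 0) :
    Dmulti k m (Fin.cons a v) =
      (∏ i, v i) • Submodule.Quotient.mk
        (relElt k m a (fun i => Units.mk0 (v i) (hv i))) := by
  by_cases ha : a = 0
  · have hnall : ¬ ∀ i, (Fin.cons a v : Fin (m+1) → k) i ≠ 0 := by
      intro h
      exact h 0 (by simpa using ha)
    rw [Dmulti, dif_neg hnall, ha, relElt_zero]
    simp
  · have hall : ∀ i, (Fin.cons a v : Fin (m+1) → k) i ≠ 0 := by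
      intro i
      refine Fin.cases ?_ ?_ i
      · simpa using ha
      · intro j; simpa using hv j
    rw [Dmulti, dif_pos hall, relElt_of_ne m a ha]
    have hfn : (fun i => Units.mk0 ((Fin.cons a v : Fin (m+1) → k) i) (hall i)) =
        Fin.cons (Units.mk0 a ha) (fun i => Units.mk0 (v i) (hv i)) := by
      ext i
      refine Fin.cases ?_ ?_ i
      · simp
      · intro j; simp
    rw [hfn, ← Submodule.Quotient.mk_smul, TensorProduct.smul_tmul', smul_eq_mul]
    congr 2
    rw [Fin.prod_cons, mul_comm]

end auxLemmas

/-- `D` is a derivation in each argument (stated in the first argument,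
the other arguments being units) — multiplicative Leibniz rule and additivity — and it
is alternating in its arguments. (Here `n - 1 = m + 1`.) -/
theorem stmt4 (m : ℕ) :
    (∀ (a b : k) (v : Fin m → k), (∀ i, v i ≠ 0) →
      Dmulti k m (Fin.cons (a * b) v) =
        a • Dmulti k m (Fin.cons b v) + b • Dmulti k m (Fin.cons a v)) ∧
    (∀ (a b : k) (v : Fin m → k), (∀ i, v i ≠ 0) →
      Dmulti k m (Fin.cons (a + b) v) =
        Dmulti k m (Fin.cons a v) + Dmulti k m (Fin.cons b v)) ∧
    (∀ (v : Fin (m + 1) → k) (i j : Fin (m + 1)), i ≠ j → v i = v j →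
      Dmulti k m v = 0) := by

  refine ⟨?_, ?_, ?_⟩
  · intro a b v hv
    rw [Dmulti_cons_eq m (a*b) v hv, Dmulti_cons_eq m a v hv, Dmulti_cons_eq m b v hv,
      relElt_mul, Submodule.Quotient.mk_add, Submodule.Quotient.mk_smul,
      Submodule.Quotient.mk_smul, smul_add]
    rw [smul_comm a, smul_comm b]
  · intro a b v hv
    rw [Dmulti_cons_eq m (a+b) v hv, Dmulti_cons_eq m a v hv, Dmulti_cons_eq m b v hv,
      mk_relElt_add, smul_add]
  · intro v i j hij hvij
    by_cases h : ∀ l, v l ≠ 0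
    · rw [Dmulti, dif_pos h]
      have hw : uWedge k (m + 1) (fun l => Units.mk0 (v l) (h l)) = 0 := by
        apply Subtype.ext
        show (ExteriorAlgebra.ιMulti ℤ (m+1)) _ = 0
        apply AlternatingMap.map_eq_zero_of_eq _ _ _ hij
        congr 1
        exact Units.ext (by simpa using hvij)
      rw [hw, TensorProduct.tmul_zero]
      simp
    · rw [Dmulti, dif_neg h]
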